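/- Let R be a discrete valuation ring with fraction field K, residue field k of characteristic p, and valuation ν. Let a_1,...,a_n be positive integers such that p does not divide any sum ∑_{j∈S} a_j over nonempty subsets S ⊆ {1,...,n-1} (i.e. p does not divide d_n = ∏_{∅≠S⊆{1,...,n-1}} ∑_{j∈S} a_j), and p divides a_n but not a_1+...+a_n. Suppose x_1,...,x_n ∈ R are pairwise distinct with x_n = 1 and max norm: ν(x_i) ≥ 0 for all i, some x_i a unit, and ∑_{i=1}^n a_i x_i^m = 0 in K for m = 1,...,n-1. Then ν(x_j) > 0 for all j < n, i.e. x̄_j = 0 in k for all j ≠ n. -/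

import Mathlib

open Finset IsLocalRing

/-- Lemma 8.1 (reduction of normalized models at `aₙ`-regular primes): let `R` be a
discrete valuation ring with residue characteristic `p`. Suppose `p` divides no
subset sum `∑_{j ∈ S} aⱼ` for nonempty `S ⊆ {1, …, n-1}`, `p ∣ aₙ` and
`p ∤ a₁+⋯+aₙ`. If `x₁, …, xₙ ∈ R` are pairwise distinct, `xₙ = 1`, some `xᵢ` is a
unit, and `∑ᵢ aᵢ xᵢ^m = 0` for `m = 1, …, n-1`, then `x̄ⱼ = 0` in the residue
field for all `j ≠ n`. -/
theorem stmt14 {R : Type*} [CommRing R] [IsDomain R] [IsDiscreteValuationRing R]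
    (p : ℕ) (hp : p.Prime) [CharP (ResidueField R) p]
    (n : ℕ) (hn : 0 < n)
    (a : Fin (n + 1) → ℕ) (ha : ∀ i, 0 < a i)
    (hreg : ∀ S : Finset (Fin (n + 1)), S.Nonempty → Fin.last n ∉ S →
      ¬ p ∣ ∑ j ∈ S, a j)
    (hpan : p ∣ a (Fin.last n)) (hpsum : ¬ p ∣ ∑ i, a i)
    (x : Fin (n + 1) → R) (hx : Function.Injective x) (hxn : x (Fin.last n) = 1)
    (hxu : ∃ i, IsUnit (x i))
    (heq : ∀ m ∈ Finset.Icc 1 n, ∑ i, (a i : R) * x i ^ m = 0) :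
    ∀ j, j ≠ Fin.last n → residue R (x j) = 0 := by
  classical
  set k := ResidueField R
  set c : Fin (n + 1) → k := fun i => residue R (x i) with hc_def
  have hc : ∀ m ∈ Finset.Icc 1 n, ∑ i, (a i : k) * c i ^ m = 0 := by
    intro m hm
    have := congrArg (residue R) (heq m hm)
    simpa [map_sum, map_mul, map_pow] using this
  have han : (a (Fin.last n) : k) = 0 :=
    (CharP.cast_eq_zero_iff k p _).mpr hpan
  intro j hj
  by_contra hcj
  -- the set of indices with nonzero residue, avoiding the last index
  set S : Finset (Fin (n + 1)) :=
    Finset.univ.filter (fun i => i ≠ Fin.last n ∧ c i ≠ 0) with hS_def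
  have hjS : j ∈ S := by simp [hS_def, hj, hcj, hc_def]
  have hS : ∀ m ∈ Finset.Icc 1 n, ∑ i ∈ S, (a i : k) * c i ^ m = 0 := by
    intro m hm
    have hm1 : 1 ≤ m := (Finset.mem_Icc.mp hm).1
    rw [← hc m hm]
    apply Finset.sum_filter_of_ne
    intro i _ hne
    constructor
    · rintro rfl
      exact hne (by rw [han, zero_mul])
    · intro h0
      exact hne (by rw [h0, zero_pow (by omega), mul_zero])
  set T : Finset k := S.image c with hT_def
  have hTcard : T.card ≤ n := by
    have h1 : S ⊆ Finset.univ.erase (Fin.last n) := by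
      intro i hi
      simp only [hS_def, Finset.mem_filter] at hi
      exact Finset.mem_erase.mpr ⟨hi.2.1, Finset.mem_univ i⟩
    calc T.card ≤ S.card := Finset.card_image_le
      _ ≤ (Finset.univ.erase (Fin.last n)).card := Finset.card_le_card h1
      _ = n := by
          rw [Finset.card_erase_of_mem (Finset.mem_univ _), Finset.card_univ,
            Fintype.card_fin]
          omega
  set b : k → k := fun y => ((∑ i ∈ S.filter (fun i => c i = y), a i : ℕ) : k) with hb_def
  have hb : ∀ y ∈ T, b y ≠ 0 := by
    intro y hy
    obtain ⟨i0, hi0S, hi0⟩ := Finset.mem_image.mp hy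
    have hne : (S.filter (fun i => c i = y)).Nonempty :=
      ⟨i0, Finset.mem_filter.mpr ⟨hi0S, hi0⟩⟩
    have hlast : Fin.last n ∉ S.filter (fun i => c i = y) := by
      intro h
      have := (Finset.mem_filter.mp (Finset.mem_filter.mp h).1).2.1
      exact this rfl
    have := hreg _ hne hlast
    simp only [hb_def]
    rw [Ne, CharP.cast_eq_zero_iff k p]
    exact this
  have hfib : ∀ m ∈ Finset.Icc 1 n, ∑ y ∈ T, b y * y ^ m = 0 := by
    intro m hm
    rw [← hS m hm]
    rw [← Finset.sum_fiberwise_of_maps_to (g := c) (fun i hi => Finset.mem_image_of_mem c hi)]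
    apply Finset.sum_congr rfl
    intro y _
    rw [hb_def]
    push_cast
    rw [Nat.cast_sum (R := ResidueField R), Finset.sum_mul]
    apply Finset.sum_congr rfl
    intro i hi
    rw [(Finset.mem_filter.mp hi).2]
  -- enumerate T and apply Vandermonde nondegeneracy
  set f : Fin T.card → k := fun t => (T.equivFin.symm t : k) with hf_def
  have hfinj : Function.Injective f :=
    fun s t h => T.equivFin.symm.injective (Subtype.ext h)
  have hfT : ∀ t, f t ∈ T := fun t => (T.equivFin.symm t).2
  set v : Fin T.card → k := fun t => b (f t) * f t with hv_def
  have hv0 : v = 0 := by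
    apply Matrix.eq_zero_of_forall_pow_sum_mul_pow_eq_zero hfinj
    intro i
    have hsum : ∑ t : Fin T.card, v t * f t ^ (i : ℕ)
        = ∑ y ∈ T, b y * y ^ ((i : ℕ) + 1) := by
      rw [← Finset.sum_coe_sort T (fun y => b y * y ^ ((i : ℕ) + 1)),
        ← Equiv.sum_comp T.equivFin.symm
          (fun y : {z // z ∈ T} => b (y : k) * (y : k) ^ ((i : ℕ) + 1))]
      apply Finset.sum_congr rfl
      intro t _
      simp only [hv_def, hf_def]
      ring
    rw [hsum]
    apply hfib
    have : (i : ℕ) < T.card := i.2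
    exact Finset.mem_Icc.mpr ⟨by omega, by omega⟩
  have hcjT : c j ∈ T := Finset.mem_image_of_mem c hjS
  set t0 : Fin T.card := T.equivFin ⟨c j, hcjT⟩ with ht0
  have hft0 : f t0 = c j := by simp [hf_def, ht0]
  have : v t0 = 0 := by rw [hv0]; rfl
  rw [hv_def] at this
  simp only [hft0] at this
  rcases mul_eq_zero.mp this with h | h
  · exact hb (c j) hcjT h
  · exact hcj h
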